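/- Every group homomorphism from the direct product ℤ^ω (the Baer–Specker group) to ℤ factors through a finite subproduct; equivalently, Hom(ℤ^ω, ℤ) is isomorphic to the direct sum ⊕_ω ℤ. -/

import Mathlib

open Finset

/-- An integer divisible by kⁿ for all n (k ≥ 2) is zero. -/
lemma specker_dvd_zero {m k : ℤ} (hk : 2 ≤ k) (H : ∀ n : ℕ, k ^ n ∣ m) : m = 0 := by
  by_contra hm
  set n := m.natAbs with hn
  have h1 : (n : ℤ) < 2 ^ n := by exact_mod_cast Nat.lt_two_pow_self (n := n)
  have h2 : (2 : ℤ) ^ n ≤ k ^ n := pow_le_pow_left₀ (by norm_num) hk n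
  have h3 : k ^ n ∣ |m| := (dvd_abs _ _).mpr (H n)
  have h4 : k ^ n ≤ |m| := Int.le_of_dvd (abs_pos.mpr hm) h3
  have : |m| = (n : ℤ) := (Int.abs_eq_natAbs m)
  omega

/-- Splitting a homomorphism's value into head terms and a tail. -/
lemma specker_split (h : (ℕ → ℤ) →+ ℤ) (x : ℕ → ℤ) (n : ℕ) :
    h x = (∑ i ∈ Finset.range n, x i * h (Pi.single i 1)) +
      h (fun i => if i < n then 0 else x i) := by
  have key : ∀ j, x j = (∑ i ∈ Finset.range n, Pi.single i (x i) j)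
      + (if j < n then 0 else x j) := by
    intro j
    simp only [Pi.single_apply]
    rw [Finset.sum_ite_eq (Finset.range n) j x]
    by_cases hj : j < n <;> simp [hj]
  have hx : x = (∑ i ∈ Finset.range n, Pi.single i (x i))
      + (fun i => if i < n then 0 else x i) := by
    funext j
    rw [Pi.add_apply, Finset.sum_apply]
    exact key j
  conv_lhs => rw [hx]
  rw [map_add, map_sum]
  congr 1
  refine Finset.sum_congr rfl fun i _ => ?_
  have hs : (Pi.single i (x i) : ℕ → ℤ) = (x i) • Pi.single i (1 : ℤ) := by
    funext j
    by_cases hj : j = i <;> simp [Pi.single_apply, hj]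
  rw [hs, map_zsmul, smul_eq_mul]

/-- The tail value is divisible by p if every tail coordinate is. -/
lemma specker_tail_dvd (h : (ℕ → ℤ) →+ ℤ) (x : ℕ → ℤ) (n : ℕ) (p : ℤ)
    (hdvd : ∀ i, n ≤ i → p ∣ x i) : p ∣ h (fun i => if i < n then 0 else x i) := by
  have : (fun i => if i < n then 0 else x i)
      = p • fun i => if i < n then 0 else x i / p := by
    funext i
    by_cases hi : i < n
    · simp [hi]
    · simp only [hi, if_false, Pi.smul_apply, smul_eq_mul]
      exact (Int.mul_ediv_cancel' (hdvd i (le_of_not_gt hi))).symm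
  rw [this, map_zsmul, smul_eq_mul]
  exact Dvd.intro _ rfl

/-- Step 1: a homomorphism vanishing on all unit vectors is zero. -/
lemma specker_vanish (h : (ℕ → ℤ) →+ ℤ) (h0 : ∀ i, h (Pi.single i 1) = 0)
    (x : ℕ → ℤ) : h x = 0 := by
  have hco : ∀ i : ℕ, ∃ b c : ℤ, x i = b * 2 ^ i + c * 3 ^ i := by
    intro i
    have : IsCoprime ((2 : ℤ) ^ i) ((3 : ℤ) ^ i) :=
      (IsCoprime.pow (⟨-1, 1, by ring⟩ : IsCoprime (2 : ℤ) 3))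
    obtain ⟨u, v, huv⟩ := this
    exact ⟨x i * u, x i * v, by linear_combination (x i) * huv.symm⟩
  choose b c hbc using hco
  set y : ℕ → ℤ := fun i => b i * 2 ^ i with hy
  set z : ℕ → ℤ := fun i => c i * 3 ^ i with hz
  have hxyz : x = y + z := by funext i; simp [hy, hz, hbc i]
  have key : ∀ (k : ℤ) (w : ℕ → ℤ), 2 ≤ k → (∀ i : ℕ, (k ^ i : ℤ) ∣ w i) → h w = 0 := by
    intro k w hk hdvd
    refine specker_dvd_zero hk fun n => ?_
    rw [specker_split h w n]
    have h1 : (∑ i ∈ Finset.range n, w i * h (Pi.single i 1)) = 0 := by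
      simp [h0]
    rw [h1, zero_add]
    exact specker_tail_dvd h w n (k ^ n) fun i hi =>
      (pow_dvd_pow k hi).trans (hdvd i)
  have hy0 : h y = 0 := key 2 y (by norm_num) fun i => ⟨b i, by rw [hy]; ring⟩
  have hz0 : h z = 0 := key 3 z (by norm_num) fun i => ⟨c i, by rw [hz]; ring⟩
  rw [hxyz, map_add, hy0, hz0, add_zero]

/-- Step 2: h vanishes on all but finitely many unit vectors. -/
lemma specker_eventually (h : (ℕ → ℤ) →+ ℤ) :
    ∃ n : ℕ, ∀ i, n ≤ i → h (Pi.single i 1) = 0 := by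
  by_contra hcon
  push_neg at hcon
  set d : ℕ → ℤ := fun i => h (Pi.single i 1) with hd
  -- recursive construction of (p n, S n)
  classical
  let F : ℕ → ℤ × ℤ := fun n => Nat.rec ((1 : ℤ), (0 : ℤ))
    (fun n ps =>
      (ps.1 * (2 * |ps.2 + (if d n = 0 then 0 else ps.1) * d n| + 2),
       ps.2 + (if d n = 0 then 0 else ps.1) * d n)) n
  set p : ℕ → ℤ := fun n => (F n).1 with hp
  set S : ℕ → ℤ := fun n => (F n).2 with hS
  set x : ℕ → ℤ := fun n => if d n = 0 then 0 else p n with hxdef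
  have hF0 : F 0 = (1, 0) := rfl
  have hSs : ∀ n, S (n + 1) = S n + x n * d n := fun n => rfl
  have hps : ∀ n, p (n + 1) = p n * (2 * |S (n + 1)| + 2) := fun n => rfl
  have ppos : ∀ n, 0 < p n := by
    intro n
    induction n with
    | zero => norm_num [hp, hF0]
    | succ n ih =>
      rw [hps n]
      have := abs_nonneg (S (n + 1))
      positivity
  have pbound : ∀ n, 2 * |S n| < p n := by
    intro n
    cases n with
    | zero => simp [hp, hS, hF0]
    | succ n =>
      rw [hps n]
      have h1 := ppos n
      have h2 := abs_nonneg (S (n + 1))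
      nlinarith
  have pdvd : ∀ m n, m ≤ n → p m ∣ p n := by
    intro m n hmn
    induction n with
    | zero =>
      have : m = 0 := by omega
      simp [this]
    | succ n ih =>
      rcases Nat.lt_or_ge m (n + 1) with hlt | hge
      · exact (ih (by omega)).trans ⟨_, hps n⟩
      · have : m = n + 1 := by omega
        subst this; exact dvd_rfl
  have pgrow : ∀ n : ℕ, (2 : ℤ) ^ n ≤ p n := by
    intro n
    induction n with
    | zero => simp [hp, hF0]
    | succ n ih =>
      rw [hps n]
      have h1 := ppos n
      have h2 := abs_nonneg (S (n + 1))
      have h3 : (2:ℤ) ≤ 2 * |S (n+1)| + 2 := by linarith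
      calc (2:ℤ)^(n+1) = 2^n * 2 := by ring
        _ ≤ p n * (2 * |S (n+1)| + 2) := mul_le_mul ih h3 (by norm_num) (le_of_lt h1)
  have hSsum : ∀ n, S n = ∑ i ∈ Finset.range n, x i * d i := by
    intro n
    induction n with
    | zero => simp [hS, hF0]
    | succ n ih => rw [Finset.sum_range_succ, ← ih, hSs n]
  have hxdvd : ∀ n i, n ≤ i → p n ∣ x i := by
    intro n i hni
    by_cases hdi : d i = 0
    · simp [hxdef, hdi]
    · simp only [hxdef, hdi, if_false]
      exact pdvd n i hni
  have hcongr : ∀ n, p n ∣ h x - S n := by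
    intro n
    rw [specker_split h x n, hSsum n]
    have : (∑ i ∈ Finset.range n, x i * h (Pi.single i 1)) = ∑ i ∈ Finset.range n, x i * d i := rfl
    rw [this, add_sub_cancel_left]
    exact specker_tail_dvd h x n (p n) (hxdvd n)
  set m : ℤ := h x with hm
  -- find n₀ with 2 * |m| < p n₀
  obtain ⟨n₀, hn₀⟩ : ∃ n₀ : ℕ, 2 * |m| < p n₀ := by
    refine ⟨(2 * |m|).natAbs, ?_⟩
    calc 2 * |m| ≤ ((2 * |m|).natAbs : ℤ) := by
          rw [Int.abs_eq_natAbs] at *; omega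
      _ < 2 ^ (2 * |m|).natAbs := by exact_mod_cast Nat.lt_two_pow_self
      _ ≤ p _ := pgrow _
  have hSm : ∀ n, n₀ ≤ n → S n = m := by
    intro n hn
    have hpn : 2 * |m| < p n := lt_of_lt_of_le hn₀ (Int.le_of_dvd (ppos n) (pdvd n₀ n hn))
    have h1 := hcongr n
    have h2 := pbound n
    have h3 : |m - S n| < p n := by
      have := abs_sub_abs_le_abs_sub m (S n)
      have h4 := abs_sub m (S n)
      calc |m - S n| ≤ |m| + |S n| := abs_sub m (S n)
        _ < p n := by omega
    have h5 : p n ∣ m - S n := by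
      have : m - S n = (h x - S n) := by rw [hm]
      rw [this]; exact h1
    have := Int.eq_zero_of_abs_lt_dvd h5 h3
    omega
  obtain ⟨i, hi, hdi⟩ := hcon n₀
  have e1 : S i = m := hSm i hi
  have e2 : S (i + 1) = m := hSm (i + 1) (by omega)
  have e3 : S (i + 1) = S i + p i * d i := by
    rw [hSs i]; simp [hxdef, show d i ≠ 0 from hdi]
  have : p i * d i ≠ 0 := mul_ne_zero (ne_of_gt (ppos i)) hdi
  omega

/-- The shift-extension homomorphism. -/
def speckerExt (n : ℕ) : (ℕ → ℤ) →+ (ℕ → ℤ) where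
  toFun y := fun i => if i < n then 0 else y (i - n)
  map_zero' := by funext i; simp
  map_add' a b := by funext i; by_cases hi : i < n <;> simp [hi]

/-- Factoring: if h kills all unit vectors from n on, it kills everything supported ≥ n. -/
lemma specker_factor (h : (ℕ → ℤ) →+ ℤ) (n : ℕ)
    (hn : ∀ i, n ≤ i → h (Pi.single i 1) = 0) :
    ∀ x : ℕ → ℤ, (∀ i < n, x i = 0) → h x = 0 := by
  intro x hx
  set h' : (ℕ → ℤ) →+ ℤ := h.comp (speckerExt n) with hh'
  have h'0 : ∀ j, h' (Pi.single j 1) = 0 := by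
    intro j
    have : speckerExt n (Pi.single j 1) = Pi.single (n + j) 1 := by
      funext i
      simp only [speckerExt, AddMonoidHom.coe_mk, ZeroHom.coe_mk, Pi.single_apply]
      by_cases hi : i < n
      · rw [if_pos hi, if_neg (by omega : ¬ i = n + j)]
      · rw [if_neg hi]
        by_cases hij : i - n = j
        · rw [if_pos hij, if_pos (by omega : i = n + j)]
        · rw [if_neg hij, if_neg (by omega : ¬ i = n + j)]
    rw [hh', AddMonoidHom.comp_apply, this]
    exact hn (n + j) (by omega)
  have : h' (fun i => x (n + i)) = h x := by
    rw [hh', AddMonoidHom.comp_apply]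
    congr 1
    funext i
    simp only [speckerExt, AddMonoidHom.coe_mk, ZeroHom.coe_mk]
    by_cases hi : i < n
    · simp [hi, (hx i hi).symm]
    · simp [hi, (by omega : n + (i - n) = i)]
  rw [← this]
  exact specker_vanish h' h'0 _

/-- The comparison map from finitely supported sequences to homomorphisms. -/
def speckerHom : (ℕ →₀ ℤ) →+ ((ℕ → ℤ) →+ ℤ) where
  toFun f :=
    { toFun := fun x => f.sum fun i a => a * x i
      map_zero' := by simp
      map_add' := fun a b => by
        simp only [Pi.add_apply, mul_add]
        exact Finsupp.sum_add }
  map_zero' := by ext x; simp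
  map_add' f g := by
    ext x
    simp only [AddMonoidHom.coe_mk, ZeroHom.coe_mk, AddMonoidHom.add_apply]
    exact Finsupp.sum_add_index' (fun i => zero_mul _) (fun i b₁ b₂ => add_mul _ _ _)

lemma speckerHom_single (f : ℕ →₀ ℤ) (j : ℕ) : speckerHom f (Pi.single j 1) = f j := by
  simp only [speckerHom, AddMonoidHom.coe_mk, ZeroHom.coe_mk]
  rw [Finsupp.sum]
  have : ∀ i ∈ f.support, f i * (Pi.single j 1 : ℕ → ℤ) i = if i = j then f i else 0 := by
    intro i _
    by_cases hij : i = j <;> simp [Pi.single_apply, hij]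
  rw [Finset.sum_congr rfl this, Finset.sum_ite_eq' f.support j (fun i => f i)]
  by_cases hj : j ∈ f.support
  · simp [hj]
  · simp [hj, Finsupp.notMem_support_iff.mp hj]

lemma speckerHom_bijective : Function.Bijective speckerHom := by
  constructor
  · intro f g hfg
    ext j
    have := congrArg (fun φ => φ (Pi.single j 1)) hfg
    simpa [speckerHom_single] using this
  · intro h
    obtain ⟨n, hn⟩ := specker_eventually h
    refine ⟨Finsupp.onFinset (Finset.range n) (fun i => h (Pi.single i 1))
      (fun i hi => Finset.mem_range.mpr (by by_contra hlt; exact hi (hn i (by omega)))), ?_⟩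
    ext x
    simp only [speckerHom, AddMonoidHom.coe_mk, ZeroHom.coe_mk]
    rw [Finsupp.sum_of_support_subset _ Finsupp.support_onFinset_subset _
      (fun i _ => zero_mul (x i))]
    simp only [Finsupp.onFinset_apply]
    rw [specker_split h x n,
      specker_factor h n hn (fun i => if i < n then 0 else x i) (fun i hi => if_pos hi),
      add_zero]
    exact Finset.sum_congr rfl fun i _ => mul_comm _ _

/-- The Specker theorem: every homomorphism ℤ^ω → ℤ factors through a finite
subproduct; equivalently Hom(ℤ^ω, ℤ) ≅ ⊕_ω ℤ. -/
theorem specker_theorem :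
    (∀ h : (ℕ → ℤ) →+ ℤ, ∃ n : ℕ, ∀ x : ℕ → ℤ, (∀ i < n, x i = 0) → h x = 0) ∧
    Nonempty (((ℕ → ℤ) →+ ℤ) ≃+ (ℕ →₀ ℤ)) := by
  constructor
  · intro h
    obtain ⟨n, hn⟩ := specker_eventually h
    exact ⟨n, fun x hx => specker_factor h n hn x hx⟩
  · exact ⟨(AddEquiv.ofBijective speckerHom speckerHom_bijective).symm⟩
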